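/- Kučera's tail theorem: For every Π⁰₁ class P ⊆ 2^ω with μ(P) > 0 and every Martin-Löf random A ∈ 2^ω, there exist a string σ ∈ 2^{<ω} and B ∈ P such that A = σ⌢B (i.e. some tail of A belongs to P). -/

import Mathlib

open scoped ENNReal NNReal Classical

namespace AR

/-- Elements of Cantor space `2^ω`: infinite binary sequences. -/
abbrev Seq := ℕ → Bool

/-- Finite binary strings `2^{<ω}`. -/
abbrev Str := List Bool

/-- The first `n` bits of a sequence `A`, as a finite string (`A↾n`). -/
def pre (A : Seq) (n : ℕ) : Str := List.ofFn fun i : Fin n => A i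

/-- The basic clopen cylinder `[σ]` of all sequences extending `σ`. -/
def cyl (σ : Str) : Set Seq := {A | pre A σ.length = σ}

/-- A measure on Cantor space is *fair-coin* if every cylinder `[σ]` has measure
`2^{-|σ|}`; this uniquely characterizes the usual product measure `μ` on `2^ω`. -/
def FairCoin (μ : MeasureTheory.Measure Seq) : Prop :=
  ∀ σ : Str, μ (cyl σ) = (2 : ℝ≥0∞)⁻¹ ^ σ.length

/-- A machine is a partial computable function `2^{<ω} ⇀ 2^{<ω}`. -/
def IsMachine (M : Str →. Str) : Prop := Partrec M

/-- Kolmogorov complexity of `τ` relative to the machine `M`: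
`C_M(τ) = min{|σ| : M(σ)↓ = τ}`, with value `∞` if no such `σ` exists. -/
noncomputable def Cplx (M : Str →. Str) (τ : Str) : ℕ∞ :=
  sInf ((fun σ : Str => (σ.length : ℕ∞)) '' {σ | τ ∈ M σ})

/-- A universal machine: a machine simulating every machine up to an additive
constant.  `Cplx U` for universal `U` is plain Kolmogorov complexity `C`. -/
def UniversalMachine (U : Str →. Str) : Prop :=
  IsMachine U ∧ ∀ M : Str →. Str, IsMachine M → ∃ c : ℕ, ∀ τ, Cplx U τ ≤ Cplx M τ + c

/-- A set of strings is prefix-free if none of its elements is a proper initial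
segment of another. -/
def PrefixFree (S : Set Str) : Prop :=
  ∀ σ ∈ S, ∀ τ ∈ S, σ <+: τ → σ = τ

/-- A prefix-free machine: a machine whose domain is prefix-free. -/
def PrefixFreeMachine (M : Str →. Str) : Prop :=
  IsMachine M ∧ PrefixFree {σ | (M σ).Dom}

/-- A universal prefix-free machine.  `Cplx U` for such `U` is prefix-free
Kolmogorov complexity `K`. -/
def UniversalPFMachine (U : Str →. Str) : Prop :=
  PrefixFreeMachine U ∧
    ∀ M : Str →. Str, PrefixFreeMachine M → ∃ c : ℕ, ∀ τ, Cplx U τ ≤ Cplx M τ + c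

/-- A c.e. (recursively enumerable) predicate. -/
def CEPred {α} [Primcodable α] (p : α → Prop) : Prop :=
  Partrec fun a => Part.assert (p a) fun _ => Part.some ()

/-- A Martin-Löf test: a sequence of uniformly Σ⁰₁ classes `U i`, given by a single
c.e. set `W` of pairs, with `μ (U i) ≤ 2^{-i}`. -/
def MLTest (μ : MeasureTheory.Measure Seq) (U : ℕ → Set Seq) : Prop :=
  ∃ W : Set (ℕ × Str), CEPred (· ∈ W) ∧
    (∀ i, U i = ⋃ σ ∈ {σ : Str | (i, σ) ∈ W}, cyl σ) ∧
    ∀ i, μ (U i) ≤ (2 : ℝ≥0∞)⁻¹ ^ i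

/-- `A` is Martin-Löf random if it passes every Martin-Löf test. -/
def MLRandom (μ : MeasureTheory.Measure Seq) (A : Seq) : Prop :=
  ∀ U : ℕ → Set Seq, MLTest μ U → A ∉ ⋂ i, U i

/-- The concatenation `σ⌢B` of a finite string and an infinite sequence. -/
def catSeq (σ : Str) (B : Seq) : Seq := fun n => σ.getD n (B (n - σ.length))


/-! ### Auxiliary material for Kučera's theorem -/

section Aux

@[simp] lemma pre_length (A : Seq) (n : ℕ) : (pre A n).length = n := by simp [pre]

lemma pre_getElem (A : Seq) (n i : ℕ) (h : i < (pre A n).length) :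
    (pre A n)[i] = A i := by
  simp [pre]

lemma pre_take (A : Seq) {m n : ℕ} (h : m ≤ n) : (pre A n).take m = pre A m := by
  apply List.ext_getElem
  · simp [h]
  · intro i h1 h2
    simp [pre, List.getElem_take]

lemma pre_prefix (A : Seq) {m n : ℕ} (h : m ≤ n) : pre A m <+: pre A n := by
  rw [← pre_take A h]; exact List.take_prefix _ _

/-- The tail of a sequence. -/
def tl (A : Seq) (n : ℕ) : Seq := fun i => A (i + n)

lemma tl_tl (A : Seq) (m n : ℕ) : tl (tl A m) n = tl A (n + m) := by
  funext i; simp [tl, Nat.add_assoc]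

lemma pre_add (A : Seq) (m j : ℕ) : pre A (m + j) = pre A m ++ pre (tl A m) j := by
  apply List.ext_getElem
  · simp
  · intro i h1 h2
    rcases lt_or_ge i m with h | h
    · rw [List.getElem_append_left (by simpa)]
      simp [pre]
    · rw [List.getElem_append_right (by simpa)]
      simp only [pre, pre_length, List.getElem_ofFn]
      simp [tl, Nat.sub_add_cancel h]

lemma catSeq_pre_tl (A : Seq) (n : ℕ) : A = catSeq (pre A n) (tl A n) := by
  funext i
  rcases lt_or_ge i n with h | h
  · rw [catSeq, List.getD_eq_getElem _ _ (by simpa)]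
    simp [pre]
  · rw [catSeq, List.getD_eq_default _ _ (by simpa)]
    simp [tl, Nat.sub_add_cancel h]

lemma mem_cyl_pre (A : Seq) (n : ℕ) : A ∈ cyl (pre A n) := by
  simp [cyl, pre_take]

lemma prefix_comparable {l₁ l₂ l₃ : Str} (h1 : l₁ <+: l₃) (h2 : l₂ <+: l₃) :
    l₁ <+: l₂ ∨ l₂ <+: l₁ := by
  rcases le_total l₁.length l₂.length with h | h
  · left
    rw [List.prefix_iff_eq_take.mp h1, List.prefix_iff_eq_take.mp h2]
    exact List.take_prefix_take_left h
  · right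
    rw [List.prefix_iff_eq_take.mp h1, List.prefix_iff_eq_take.mp h2]
    exact List.take_prefix_take_left h

lemma cyl_mono {σ τ : Str} (h : σ <+: τ) : cyl τ ⊆ cyl σ := by
  intro A hA
  have hl := h.length_le
  have hpre : pre A τ.length = τ := hA
  show pre A σ.length = σ
  rw [← pre_take A hl, hpre, ← List.prefix_iff_eq_take.mp h]

lemma mem_cyl_comparable {A : Seq} {σ τ : Str} (hσ : A ∈ cyl σ) (hτ : A ∈ cyl τ) :
    σ <+: τ ∨ τ <+: σ := by
  have hσ' : pre A σ.length = σ := hσ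
  have hτ' : pre A τ.length = τ := hτ
  rcases le_total σ.length τ.length with h | h
  · left; rw [← hσ', ← hτ']; exact pre_prefix A h
  · right; rw [← hσ', ← hτ']; exact pre_prefix A h

lemma measurable_cyl (σ : Str) : MeasurableSet (cyl σ) := by
  have : cyl σ = ⋂ i : Fin σ.length, {A : Seq | A i = σ[(i : ℕ)]} := by
    ext A
    simp only [Set.mem_iInter, Set.mem_setOf_eq]
    constructor
    · intro hA i
      have h : pre A σ.length = σ := hA
      have h2 : (i : ℕ) < (pre A σ.length).length := by simp [i.2]
      calc A (i : ℕ) = (pre A σ.length)[(i : ℕ)]'h2 := (pre_getElem _ _ _ h2).symm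
        _ = σ[(i : ℕ)] := List.getElem_of_eq h _
    · intro h
      show pre A σ.length = σ
      apply List.ext_getElem (by simp)
      intro i h1 h2
      simp only [pre, List.getElem_ofFn]
      exact h ⟨i, h2⟩
  rw [this]
  exact MeasurableSet.iInter fun i =>
    measurable_pi_apply (i : ℕ) (measurableSet_singleton _)

lemma cyl_nil : cyl ([] : Str) = Set.univ := by
  ext A; simp [cyl, pre]

lemma measure_biUnion_cyl_le (μ : MeasureTheory.Measure Seq) (hμ : FairCoin μ) (S : Set Str) :
    μ (⋃ σ ∈ S, cyl σ) ≤ ∑' σ : S, (2 : ℝ≥0∞)⁻¹ ^ (σ : Str).length := by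
  refine le_trans (MeasureTheory.measure_biUnion_le μ (Set.to_countable S) _) ?_
  exact le_of_eq (tsum_congr fun σ => hμ σ)

lemma measure_biUnion_cyl_eq (μ : MeasureTheory.Measure Seq) (hμ : FairCoin μ) (S : Set Str)
    (hS : PrefixFree S) :
    μ (⋃ σ ∈ S, cyl σ) = ∑' σ : S, (2 : ℝ≥0∞)⁻¹ ^ (σ : Str).length := by
  rw [MeasureTheory.measure_biUnion (Set.to_countable S) ?_ fun σ _ => measurable_cyl σ]
  · exact tsum_congr fun σ => hμ σ
  · intro σ hσ τ hτ hne
    refine Set.disjoint_left.mpr fun A hAσ hAτ => hne ?_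
    rcases mem_cyl_comparable hAσ hAτ with h | h
    · exact hS σ hσ τ hτ h
    · exact (hS τ hτ σ hσ h).symm

lemma one_add_mul_le_pow_ennreal (ε : ℝ≥0∞) (m : ℕ) : 1 + m * ε ≤ (1 + ε) ^ m := by
  induction m with
  | zero => simp
  | succ n ih =>
    rw [pow_succ]
    calc 1 + (n + 1 : ℕ) * ε = (1 + n * ε) + ε := by push_cast; ring
      _ ≤ (1 + ε) ^ n + ε := by gcongr
      _ ≤ (1 + ε) ^ n + (1 + ε) ^ n * ε := by
          gcongr
          exact le_mul_of_one_le_left zero_le (one_le_pow_of_one_le' le_self_add n)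
      _ = (1 + ε) ^ n * (1 + ε) := by ring

lemma bernoulli_aux (k : ℕ) : ((1 : ℝ≥0∞) - 2⁻¹ ^ k) ^ (2 ^ k) ≤ 2⁻¹ := by
  set ε : ℝ≥0∞ := 2⁻¹ ^ k with hε
  have hε1 : ε ≤ 1 := by
    rw [hε]
    exact pow_le_one' (ENNReal.inv_le_one.mpr one_le_two) k
  have hεtop : ε ≠ ⊤ := by simp [hε]
  have hmul : (1 - ε) * (1 + ε) ≤ 1 := by
    rw [ENNReal.sub_mul (fun _ _ => ENNReal.add_ne_top.mpr ⟨ENNReal.one_ne_top, hεtop⟩), one_mul]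
    calc (1 + ε) - ε * (1 + ε) ≤ (1 + ε) - ε := by
          refine tsub_le_tsub_left ?_ _
          calc ε = ε * 1 := (mul_one ε).symm
            _ ≤ ε * (1 + ε) := by gcongr; exact le_add_right le_rfl
      _ = 1 := ENNReal.add_sub_cancel_right hεtop
  have h2 : (2 : ℝ≥0∞) ≤ (1 + ε) ^ (2 ^ k) := by
    refine le_trans ?_ (one_add_mul_le_pow_ennreal ε _)
    have : ((2 ^ k : ℕ) : ℝ≥0∞) * ε = 1 := by
      rw [hε]
      push_cast
      rw [← ENNReal.inv_pow, ENNReal.mul_inv_cancel (by positivity) (by simp)]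
    rw [this]
    norm_num
  have hab : (1 - ε) ^ (2 ^ k) * (1 + ε) ^ (2 ^ k) ≤ 1 := by
    rw [← mul_pow]
    exact pow_le_one' hmul _
  rw [ENNReal.le_inv_iff_mul_le]
  calc (1 - ε) ^ 2 ^ k * 2 ≤ (1 - ε) ^ 2 ^ k * (1 + ε) ^ 2 ^ k := by gcongr
    _ ≤ 1 := hab

open Nat.Partrec (Code)
open Nat.Partrec.Code

/-- `hitF c σ`: some initial segment of `σ` is enumerated into the c.e. set coded by `c`
within `|σ|` steps. -/
def hitF (c : Code) (σ : Str) : Bool :=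
  (List.range (σ.length + 1)).any fun j =>
    (evaln σ.length c (Encodable.encode (σ.take j))).isSome

/-- `G0B c σ`: `σ` is a minimal hit string. -/
def G0B (c : Code) (σ : Str) : Bool :=
  hitF c σ && !((List.range σ.length).any fun m => hitF c (σ.take m))

/-- First element of a list satisfying a predicate. -/
def firstO (p : ℕ → Bool) (l : List ℕ) : Option ℕ :=
  l.foldr (fun a r => bif p a then some a else r) none

/-- Strip the (unique) `G0`-prefix from a string. -/
def strip (c : Code) (σ : Str) : Option Str :=
  (firstO (fun j => G0B c (σ.take j)) (List.range (σ.length + 1))).map fun j => σ.drop j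

def stepO (c : Code) (o : Option Str) : Option Str := o.bind (strip c)

/-- `GB c n σ`: `σ` is a concatenation of `n+1` strings in `G0`. -/
def GB (c : Code) (n : ℕ) (σ : Str) : Bool := decide ((stepO c)^[n + 1] (some σ) = some [])

/-- Mathematical characterization of `GB`. -/
def Gm (c : Code) : ℕ → Str → Prop
  | 0 => fun σ => G0B c σ = true
  | n + 1 => fun σ => ∃ τ ρ, G0B c τ = true ∧ Gm c n ρ ∧ σ = τ ++ ρ

lemma hitF_iff {c : Code} {σ : Str} : hitF c σ = true ↔
    ∃ j ≤ σ.length, (evaln σ.length c (Encodable.encode (σ.take j))).isSome := by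
  simp [hitF, List.any_eq_true, Nat.lt_succ_iff]

lemma G0B_iff {c : Code} {σ : Str} : G0B c σ = true ↔
    (hitF c σ = true ∧ ∀ m < σ.length, hitF c (σ.take m) = false) := by
  simp only [G0B, Bool.and_eq_true, Bool.not_eq_true', List.any_eq_false, List.mem_range]
  constructor
  · rintro ⟨h1, h2⟩
    exact ⟨h1, fun m hm => Bool.eq_false_iff.mpr (h2 m hm)⟩
  · rintro ⟨h1, h2⟩
    exact ⟨h1, fun m hm => Bool.eq_false_iff.mp (h2 m hm)⟩

lemma G0_prefixFree (c : Code) : PrefixFree {σ | G0B c σ = true} := by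
  intro σ hσ τ hτ hpre
  rcases lt_or_eq_of_le hpre.length_le with hlt | heq
  · have h1 := (G0B_iff.mp hσ).1
    have h2 := (G0B_iff.mp hτ).2 σ.length hlt
    rw [← List.prefix_iff_eq_take.mp hpre, h1] at h2
    exact absurd h2 (by simp)
  · exact hpre.eq_of_length heq

lemma firstO_eq_some {p : ℕ → Bool} {l : List ℕ} {j : ℕ} (h : firstO p l = some j) :
    p j = true ∧ j ∈ l := by
  induction l with
  | nil => simp [firstO] at h
  | cons a l ih =>
    rw [firstO, List.foldr_cons] at h
    rcases hpa : p a with _ | _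
    · rw [hpa, Bool.cond_false] at h
      have := ih h
      exact ⟨this.1, List.mem_cons_of_mem _ this.2⟩
    · rw [hpa, Bool.cond_true] at h
      obtain rfl : a = j := by simpa using h
      exact ⟨hpa, List.mem_cons_self⟩

lemma firstO_isSome {p : ℕ → Bool} {l : List ℕ} {j : ℕ} (hj : j ∈ l) (hp : p j = true) :
    (firstO p l).isSome := by
  induction l with
  | nil => simp at hj
  | cons a l ih =>
    rw [firstO, List.foldr_cons]
    rcases hpa : p a with _ | _
    · rw [Bool.cond_false]
      rcases List.mem_cons.mp hj with rfl | hj'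
      · rw [hp] at hpa; simp at hpa
      · exact ih hj'
    · simp

lemma strip_eq_some_iff {c : Code} {σ ρ : Str} :
    strip c σ = some ρ ↔ ∃ τ, G0B c τ = true ∧ σ = τ ++ ρ := by
  constructor
  · intro h
    rw [strip, Option.map_eq_some_iff] at h
    obtain ⟨j, hj, rfl⟩ := h
    obtain ⟨hpj, hjl⟩ := firstO_eq_some hj
    exact ⟨σ.take j, hpj, (List.take_append_drop j σ).symm⟩
  · rintro ⟨τ, hτ, rfl⟩
    have hj : τ.length ∈ List.range ((τ ++ ρ).length + 1) := by
      simp [Nat.lt_succ_iff]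
    have hp : G0B c ((τ ++ ρ).take τ.length) = true := by
      rwa [List.take_left]
    have hs := firstO_isSome (p := fun j => G0B c ((τ ++ ρ).take j)) hj hp
    obtain ⟨j', hj'⟩ := Option.isSome_iff_exists.mp hs
    have hfound := firstO_eq_some hj'
    have htake : (τ ++ ρ).take j' <+: (τ ++ ρ) := List.take_prefix _ _
    have hτpre : τ <+: (τ ++ ρ) := List.prefix_append _ _
    have heq : (τ ++ ρ).take j' = τ := by
      rcases prefix_comparable htake hτpre with h | h
      · exact G0_prefixFree c _ hfound.1 _ hτ h
      · exact (G0_prefixFree c _ hτ _ hfound.1 h).symm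
    have hjlen : j' = τ.length := by
      have hj'le : j' ≤ (τ ++ ρ).length := Nat.lt_succ_iff.mp (List.mem_range.mp hfound.2)
      have hlen := congrArg List.length heq
      simp only [List.length_take] at hlen
      omega
    rw [strip, hj', Option.map_some]
    rw [hjlen, List.drop_left]

lemma stepO_iterate_none (c : Code) (m : ℕ) : (stepO c)^[m] none = none := by
  induction m with
  | zero => rfl
  | succ n ih =>
    rw [Function.iterate_succ_apply]
    simpa [stepO] using ih

lemma strip_isSome_of {c : Code} {σ τ ρ : Str} (hτ : G0B c τ = true) (hσ : σ = τ ++ ρ) :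
    ∃ ρ', strip c σ = some ρ' := by
  rcases hstrip : strip c σ with _ | ρ'
  · exfalso
    subst hσ
    have hj : τ.length ∈ List.range ((τ ++ ρ).length + 1) := by simp [Nat.lt_succ_iff]
    have hp : G0B c ((τ ++ ρ).take τ.length) = true := by rwa [List.take_left]
    have hs := firstO_isSome (p := fun j => G0B c ((τ ++ ρ).take j)) hj hp
    rw [strip] at hstrip
    rcases Option.isSome_iff_exists.mp hs with ⟨j, hj'⟩
    rw [hj'] at hstrip
    simp at hstrip
  · exact ⟨ρ', rfl⟩

lemma GB_iff_Gm (c : Code) : ∀ n σ, GB c n σ = true ↔ Gm c n σ := by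
  intro n
  induction n with
  | zero =>
    intro σ
    rw [GB, decide_eq_true_iff]
    have h1 : (stepO c)^[1] (some σ) = stepO c (some σ) := rfl
    rw [h1]
    show Option.bind (some σ) (strip c) = some [] ↔ Gm c 0 σ
    rw [Option.bind_some]
    constructor
    · intro h
      obtain ⟨τ, hτ, hs⟩ := strip_eq_some_iff.mp h
      rw [List.append_nil] at hs
      show G0B c σ = true
      rwa [hs]
    · intro h
      exact strip_eq_some_iff.mpr ⟨σ, h, (List.append_nil σ).symm⟩
  | succ n ih =>
    intro σ
    rw [GB, decide_eq_true_iff]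
    rw [Function.iterate_succ_apply]
    have hso : stepO c (some σ) = strip c σ := rfl
    rw [hso]
    rcases hstrip : strip c σ with _ | ρ
    · rw [stepO_iterate_none]
      constructor
      · intro h; exact absurd h (by simp)
      · rintro ⟨τ, ρ, hτ, hρ, rfl⟩
        obtain ⟨ρ', hρ'⟩ := strip_isSome_of hτ rfl
        rw [hstrip] at hρ'
        exact absurd hρ' (by simp)
    · have hGBn : ((stepO c)^[n + 1] (some ρ) = some []) ↔ Gm c n ρ := by
        have := ih ρ
        rw [GB, decide_eq_true_iff] at this
        exact this
      rw [hGBn]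
      obtain ⟨τ0, hτ0, hσeq⟩ := strip_eq_some_iff.mp hstrip
      constructor
      · intro h
        exact ⟨τ0, ρ, hτ0, h, hσeq⟩
      · rintro ⟨τ', ρ', hτ', hρ', hσeq'⟩
        have h1 : τ0 <+: σ := hσeq ▸ List.prefix_append _ _
        have h2 : τ' <+: σ := hσeq' ▸ List.prefix_append _ _
        have heq : τ0 = τ' := by
          rcases prefix_comparable h1 h2 with h | h
          · exact G0_prefixFree c _ hτ0 _ hτ' h
          · exact (G0_prefixFree c _ hτ' _ hτ0 h).symm
        subst heq
        have : ρ = ρ' := by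
          apply List.append_cancel_left (as := τ0)
          rw [← hσeq, ← hσeq']
        rwa [this]

lemma Gm_prefixFree (c : Code) (n : ℕ) : PrefixFree {σ | Gm c n σ} := by
  induction n with
  | zero => exact G0_prefixFree c
  | succ n ih =>
    rintro σ hσ τ hτ hpre
    obtain ⟨a, b, ha, hb, rfl⟩ := hσ
    obtain ⟨a', b', ha', hb', rfl⟩ := hτ
    have h1 : a <+: a' ++ b' := (List.prefix_append a b).trans hpre
    have h2 : a' <+: a' ++ b' := List.prefix_append _ _
    have heq : a = a' := by
      rcases prefix_comparable h1 h2 with h | h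
      · exact G0_prefixFree c _ ha _ ha' h
      · exact (G0_prefixFree c _ ha' _ ha h).symm
    subst heq
    have hb2 : b <+: b' := (List.prefix_append_right_inj a).mp hpre
    rw [ih b hb b' hb' hb2]

lemma tsum_Gm_succ_le (c : Code) (n : ℕ) :
    (∑' σ : {σ : Str // Gm c (n + 1) σ}, (2 : ℝ≥0∞)⁻¹ ^ (σ : Str).length) ≤
      (∑' σ : {σ : Str // Gm c 0 σ}, (2 : ℝ≥0∞)⁻¹ ^ (σ : Str).length) *
      (∑' σ : {σ : Str // Gm c n σ}, (2 : ℝ≥0∞)⁻¹ ^ (σ : Str).length) := by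
  have hdec : ∀ σ : {σ : Str // Gm c (n + 1) σ},
      ∃ p : {τ : Str // Gm c 0 τ} × {ρ : Str // Gm c n ρ},
        (σ : Str) = (p.1 : Str) ++ (p.2 : Str) := by
    rintro ⟨σ, τ, ρ, hτ, hρ, rfl⟩
    exact ⟨(⟨τ, hτ⟩, ⟨ρ, hρ⟩), rfl⟩
  choose Ψ hΨ using hdec
  have hinj : Function.Injective Ψ := by
    intro σ1 σ2 h
    apply Subtype.ext
    rw [hΨ σ1, hΨ σ2, h]
  calc (∑' σ : {σ : Str // Gm c (n + 1) σ}, (2 : ℝ≥0∞)⁻¹ ^ (σ : Str).length)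
      = ∑' σ : {σ : Str // Gm c (n + 1) σ},
          ((2 : ℝ≥0∞)⁻¹ ^ ((Ψ σ).1 : Str).length * (2 : ℝ≥0∞)⁻¹ ^ ((Ψ σ).2 : Str).length) := by
        refine tsum_congr fun σ => ?_
        rw [← pow_add]
        congr 1
        rw [hΨ σ]
        simp
    _ ≤ ∑' p : {τ : Str // Gm c 0 τ} × {ρ : Str // Gm c n ρ},
          ((2 : ℝ≥0∞)⁻¹ ^ (p.1 : Str).length * (2 : ℝ≥0∞)⁻¹ ^ (p.2 : Str).length) :=
        ENNReal.tsum_comp_le_tsum_of_injective hinj _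
    _ = _ := by
        calc (∑' p : {τ : Str // Gm c 0 τ} × {ρ : Str // Gm c n ρ},
                (2 : ℝ≥0∞)⁻¹ ^ (p.1 : Str).length * (2 : ℝ≥0∞)⁻¹ ^ (p.2 : Str).length)
            = ∑' τ : {τ : Str // Gm c 0 τ}, ∑' ρ : {ρ : Str // Gm c n ρ},
                (2 : ℝ≥0∞)⁻¹ ^ (τ : Str).length * (2 : ℝ≥0∞)⁻¹ ^ (ρ : Str).length :=
              ENNReal.tsum_prod (f := fun (τ : {τ : Str // Gm c 0 τ}) (ρ : {ρ : Str // Gm c n ρ}) =>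
                (2 : ℝ≥0∞)⁻¹ ^ (τ : Str).length * (2 : ℝ≥0∞)⁻¹ ^ (ρ : Str).length)
          _ = ∑' τ : {τ : Str // Gm c 0 τ},
                ((2 : ℝ≥0∞)⁻¹ ^ (τ : Str).length *
                  ∑' ρ : {ρ : Str // Gm c n ρ}, (2 : ℝ≥0∞)⁻¹ ^ (ρ : Str).length) :=
              tsum_congr fun τ => ENNReal.tsum_mul_left
          _ = _ := ENNReal.tsum_mul_right

lemma take_eq_map (σ : Str) (j : ℕ) :
    σ.take j = (List.range (min j σ.length)).map σ.getI := by
  apply List.ext_getElem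
  · simp
  · intro i h1 h2
    simp only [List.getElem_take, List.getElem_map, List.getElem_range]
    rw [List.getI_eq_getElem]

lemma drop_eq_map (σ : Str) (j : ℕ) :
    σ.drop j = (List.range (σ.length - j)).map fun i => σ.getI (j + i) := by
  apply List.ext_getElem
  · simp
  · intro i h1 h2
    simp only [List.getElem_drop, List.getElem_map, List.getElem_range]
    rw [List.getI_eq_getElem]

lemma primrec_take : Primrec₂ fun (σ : Str) (j : ℕ) => σ.take j := by
  have h : Primrec fun p : Str × ℕ => (List.range (min p.2 p.1.length)).map p.1.getI := by
    refine Primrec.list_map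
      (Primrec.list_range.comp (Primrec.nat_min.comp Primrec.snd
        (Primrec.list_length.comp Primrec.fst))) ?_
    exact (Primrec.list_getI.comp (Primrec.fst.comp Primrec.fst) Primrec.snd).to₂
  exact Primrec₂.of_eq h.to₂ fun σ j => (take_eq_map σ j).symm

lemma primrec_drop : Primrec₂ fun (σ : Str) (j : ℕ) => σ.drop j := by
  have h : Primrec fun p : Str × ℕ =>
      (List.range (p.1.length - p.2)).map fun i => p.1.getI (p.2 + i) := by
    refine Primrec.list_map
      (Primrec.list_range.comp (Primrec.nat_sub.comp
        (Primrec.list_length.comp Primrec.fst) Primrec.snd)) ?_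
    exact (Primrec.list_getI.comp (Primrec.fst.comp Primrec.fst)
      (Primrec.nat_add.comp (Primrec.snd.comp Primrec.fst) Primrec.snd)).to₂
  exact Primrec₂.of_eq h.to₂ fun σ j => (drop_eq_map σ j).symm

lemma any_eq_foldr {β : Type*} (l : List β) (p : β → Bool) :
    l.any p = l.foldr (fun b r => p b || r) false := by
  induction l with
  | nil => rfl
  | cons a l ih => simp [ih]

lemma primrec_any {α β : Type*} [Primcodable α] [Primcodable β]
    {f : α → List β} {p : α → β → Bool} (hf : Primrec f) (hp : Primrec₂ p) :
    Primrec fun a => (f a).any (p a) := by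
  have h : Primrec fun a => (f a).foldr (fun b r => p a b || r) false := by
    refine Primrec.list_foldr (h := fun a (q : β × Bool) => p a q.1 || q.2) hf
      (Primrec.const false) ?_
    exact ((Primrec.dom_bool₂ (· || ·)).comp₂
      (hp.comp₂ Primrec₂.left (Primrec.fst.comp Primrec.snd).to₂)
      ((Primrec.snd.comp Primrec.snd).to₂))
  exact h.of_eq fun a => (any_eq_foldr _ _).symm

lemma primrec_hitF (c : Code) : Primrec (hitF c) := by
  refine primrec_any
    (p := fun (σ : Str) (j : ℕ) => (evaln σ.length c (Encodable.encode (σ.take j))).isSome)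
    (Primrec.list_range.comp (Primrec.succ.comp Primrec.list_length)) ?_
  exact (Primrec.option_isSome.comp (primrec_evaln.comp
    (Primrec.pair (Primrec.pair (Primrec.list_length.comp Primrec.fst) (Primrec.const c))
      (Primrec.encode.comp (primrec_take.comp Primrec.fst Primrec.snd))))).to₂

lemma primrec_G0B (c : Code) : Primrec (G0B c) := by
  refine (Primrec.dom_bool₂ (· && ·)).comp (primrec_hitF c) ?_
  refine (Primrec.dom_bool (!·)).comp ?_
  refine primrec_any (Primrec.list_range.comp Primrec.list_length) ?_
  exact ((primrec_hitF c).comp (primrec_take.comp Primrec.fst Primrec.snd)).to₂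

lemma primrec_strip (c : Code) : Primrec (strip c) := by
  have hfirst : Primrec fun σ : Str =>
      firstO (fun j => G0B c (σ.take j)) (List.range (σ.length + 1)) := by
    unfold firstO
    refine Primrec.list_foldr
      (h := fun (σ : Str) (q : ℕ × Option ℕ) => bif G0B c (σ.take q.1) then some q.1 else q.2)
      (Primrec.list_range.comp (Primrec.succ.comp Primrec.list_length))
      (Primrec.const none) ?_
    refine Primrec.cond ((primrec_G0B c).comp
        (primrec_take.comp Primrec.fst (Primrec.fst.comp Primrec.snd)))
      (Primrec.option_some.comp (Primrec.fst.comp Primrec.snd))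
      (Primrec.snd.comp Primrec.snd) |>.to₂
  unfold strip
  exact Primrec.option_map hfirst (primrec_drop.comp Primrec.fst Primrec.snd).to₂

lemma primrec_stepO (c : Code) : Primrec (stepO c) :=
  Primrec.option_bind₁ (primrec_strip c)

lemma primrec_GBpair (c : Code) (K : ℕ) :
    Primrec fun p : ℕ × Str => GB c (p.1 * K) p.2 := by
  have hiter : Primrec fun p : ℕ × Str => (stepO c)^[p.1 * K + 1] (some p.2) := by
    refine Primrec.nat_iterate
      (Primrec.succ.comp (Primrec.nat_mul.comp Primrec.fst (Primrec.const K)))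
      (Primrec.option_some.comp Primrec.snd) ?_
    exact ((primrec_stepO c).comp Primrec.snd).to₂
  unfold GB
  exact PrimrecPred.decide <| Primrec.eq.comp hiter (Primrec.const (some ([] : Str)))

lemma exists_code_of_CEPred {W : Set Str} (h : CEPred (· ∈ W)) :
    ∃ c : Code, ∀ σ : Str, σ ∈ W ↔ ∃ s, (evaln s c (Encodable.encode σ)).isSome := by
  obtain ⟨c, hc⟩ := exists_code.mp h
  refine ⟨c, fun σ => ?_⟩
  have hdom : σ ∈ W ↔ (eval c (Encodable.encode σ)).Dom := by
    rw [hc]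
    simp [Encodable.encodek, Part.assert]
  rw [hdom]
  constructor
  · intro h'
    obtain ⟨x, hx⟩ := Part.dom_iff_mem.mp h'
    obtain ⟨k, hk⟩ := evaln_complete.mp hx
    exact ⟨k, Option.isSome_iff_exists.mpr ⟨x, hk⟩⟩
  · rintro ⟨s, hs⟩
    obtain ⟨x, hx⟩ := Option.isSome_iff_exists.mp hs
    exact Part.dom_iff_mem.mpr ⟨x, evaln_sound hx⟩

end Aux

/-- **Kučera's tail theorem**: for every Π⁰₁ class `P` of positive measure and every
Martin-Löf random `A`, some tail of `A` belongs to `P`: there are `σ` and `B ∈ P`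
with `A = σ⌢B`. -/
theorem kucera_tails (μ : MeasureTheory.Measure Seq) (hμ : FairCoin μ)
    (P : Set Seq) (hP : ∃ W : Set Str, CEPred (· ∈ W) ∧ P = (⋃ σ ∈ W, cyl σ)ᶜ)
    (hpos : 0 < μ P) (A : Seq) (hA : MLRandom μ A) :
    ∃ (σ : Str) (B : Seq), B ∈ P ∧ A = catSeq σ B := by
  classical
  obtain ⟨W, hWce, hPdef⟩ := hP
  obtain ⟨c, hW⟩ := exists_code_of_CEPred hWce
  by_contra hcon
  push_neg at hcon
  -- every tail of `A` lies in the open set `[W]`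
  have htail : ∀ j, tl A j ∈ ⋃ σ ∈ W, cyl σ := by
    intro j
    by_contra h
    exact hcon (pre A j) (tl A j) (by rw [hPdef]; exact h) (catSeq_pre_tl A j)
  -- if a sequence is in `[W]`, it has a prefix in `G0`
  have hWG0 : ∀ B : Seq, B ∈ (⋃ σ ∈ W, cyl σ) → ∃ m, G0B c (pre B m) = true := by
    intro B hB
    obtain ⟨τ, hτW, hBτ⟩ := Set.mem_iUnion₂.mp hB
    obtain ⟨s, hs⟩ := (hW τ).mp hτW
    set n := max s τ.length with hn
    have hhit : hitF c (pre B n) = true := by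
      refine hitF_iff.mpr ⟨τ.length, by simp [hn], ?_⟩
      have h1 : (pre B n).take τ.length = τ := by
        rw [pre_take B (le_max_right s τ.length)]
        exact hBτ
      rw [h1, pre_length]
      obtain ⟨x, hx⟩ := Option.isSome_iff_exists.mp hs
      exact Option.isSome_iff_exists.mpr
        ⟨x, Nat.Partrec.Code.evaln_mono (le_max_left s τ.length) hx⟩
    have hex : ∃ m, hitF c (pre B m) = true := ⟨n, hhit⟩
    refine ⟨Nat.find hex, ?_⟩
    refine G0B_iff.mpr ⟨Nat.find_spec hex, ?_⟩
    intro m hm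
    rw [pre_length] at hm
    rw [pre_take B hm.le]
    exact Bool.eq_false_iff.mpr (Nat.find_min hex hm)
  -- iterating: some prefix of `A` is in each `Gm c n`
  have hclaim : ∀ n (B : Seq), (∀ j, tl B j ∈ ⋃ σ ∈ W, cyl σ) →
      ∃ m, Gm c n (pre B m) := by
    intro n
    induction n with
    | zero =>
      intro B hB
      obtain ⟨m, hm⟩ := hWG0 B (by exact hB 0)
      exact ⟨m, hm⟩
    | succ n ih =>
      intro B hB
      obtain ⟨m0, hm0⟩ := hWG0 B (by exact hB 0)
      obtain ⟨m', hm'⟩ := ih (tl B m0) (fun j => by rw [tl_tl]; exact hB (j + m0))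
      exact ⟨m0 + m', pre B m0, pre (tl B m0) m', hm0, hm', pre_add B m0 m'⟩
  -- measure bounds
  obtain ⟨k, hk⟩ := ENNReal.exists_inv_two_pow_lt (ne_of_gt hpos)
  set q : ℝ≥0∞ := 1 - 2⁻¹ ^ k with hq
  have hq1 : q ≤ 1 := tsub_le_self
  have hWmeas : MeasurableSet (⋃ σ ∈ W, cyl σ) :=
    MeasurableSet.biUnion (Set.to_countable W) fun σ _ => measurable_cyl σ
  have huniv : μ Set.univ = 1 := by
    rw [← cyl_nil]
    simpa using hμ []
  have hWP : μ (⋃ σ ∈ W, cyl σ) + μ P = 1 := by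
    rw [hPdef, MeasureTheory.measure_add_measure_compl hWmeas, huniv]
  have hWq : μ (⋃ σ ∈ W, cyl σ) ≤ q := by
    refine ENNReal.le_sub_of_add_le_right (by simp) ?_
    calc μ (⋃ σ ∈ W, cyl σ) + 2⁻¹ ^ k ≤ μ (⋃ σ ∈ W, cyl σ) + μ P :=
          add_le_add_right hk.le _
      _ = 1 := hWP
  -- the union over G0 equals the union over W
  have hG0W : (⋃ σ ∈ {σ : Str | G0B c σ = true}, cyl σ) = ⋃ σ ∈ W, cyl σ := by
    apply Set.Subset.antisymm
    · refine Set.iUnion₂_subset fun σ hσ => ?_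
      obtain ⟨j, hj, hsome⟩ := hitF_iff.mp (G0B_iff.mp hσ).1
      obtain ⟨x, hx⟩ := Option.isSome_iff_exists.mp hsome
      have hτW : σ.take j ∈ W := (hW _).mpr ⟨σ.length, Option.isSome_iff_exists.mpr ⟨x, hx⟩⟩
      exact (cyl_mono (List.take_prefix j σ)).trans
        (Set.subset_iUnion₂ (s := fun (σ : Str) (_ : σ ∈ W) => cyl σ) (σ.take j) hτW)
    · intro B hB
      obtain ⟨m, hm⟩ := hWG0 B hB
      exact Set.mem_iUnion₂.mpr ⟨pre B m, hm, mem_cyl_pre B m⟩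
  -- sums over the Gm sets
  set f : ℕ → ℝ≥0∞ := fun n => ∑' σ : {σ : Str // Gm c n σ}, (2 : ℝ≥0∞)⁻¹ ^ (σ : Str).length
    with hf
  have hf0 : f 0 ≤ q := by
    have heq := measure_biUnion_cyl_eq μ hμ {σ : Str | G0B c σ = true} (G0_prefixFree c)
    calc f 0 = μ (⋃ σ ∈ {σ : Str | G0B c σ = true}, cyl σ) := heq.symm
      _ = μ (⋃ σ ∈ W, cyl σ) := by rw [hG0W]
      _ ≤ q := hWq
  have hfn : ∀ n, f n ≤ q ^ (n + 1) := by
    intro n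
    induction n with
    | zero => simpa using hf0
    | succ n ih =>
      calc f (n + 1) ≤ f 0 * f n := tsum_Gm_succ_le c n
        _ ≤ q * q ^ (n + 1) := by gcongr
        _ = q ^ (n + 2) := by ring
  -- the Martin-Löf test
  set U : ℕ → Set Seq := fun i => ⋃ σ ∈ {σ : Str | (i, σ) ∈
      {p : ℕ × Str | GB c (p.1 * 2 ^ k) p.2 = true}}, cyl σ with hU
  have hUmeasure : ∀ i, μ (U i) ≤ (2 : ℝ≥0∞)⁻¹ ^ i := by
    intro i
    have hsetEq : {σ : Str | (i, σ) ∈ {p : ℕ × Str | GB c (p.1 * 2 ^ k) p.2 = true}} =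
        {σ : Str | Gm c (i * 2 ^ k) σ} := by
      ext σ
      exact GB_iff_Gm c (i * 2 ^ k) σ
    have hUi : U i = ⋃ σ ∈ {σ : Str | Gm c (i * 2 ^ k) σ}, cyl σ := by
      show (⋃ σ ∈ {σ : Str | (i, σ) ∈ {p : ℕ × Str | GB c (p.1 * 2 ^ k) p.2 = true}}, cyl σ) =
        ⋃ σ ∈ {σ : Str | Gm c (i * 2 ^ k) σ}, cyl σ
      rw [hsetEq]
    calc μ (U i) = μ (⋃ σ ∈ {σ : Str | Gm c (i * 2 ^ k) σ}, cyl σ) := by rw [hUi]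
      _ ≤ ∑' σ : {σ : Str | Gm c (i * 2 ^ k) σ}, (2 : ℝ≥0∞)⁻¹ ^ (σ : Str).length :=
          measure_biUnion_cyl_le μ hμ _
      _ ≤ q ^ (i * 2 ^ k + 1) := hfn (i * 2 ^ k)
      _ ≤ q ^ (i * 2 ^ k) := by
          rw [pow_succ]
          calc q ^ (i * 2 ^ k) * q ≤ q ^ (i * 2 ^ k) * 1 := by gcongr
            _ = q ^ (i * 2 ^ k) := mul_one _
      _ = (q ^ (2 ^ k)) ^ i := by rw [← pow_mul, mul_comm]
      _ ≤ (2⁻¹) ^ i := by gcongr; exact bernoulli_aux k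
  have hML : MLTest μ U := by
    refine ⟨{p : ℕ × Str | GB c (p.1 * 2 ^ k) p.2 = true}, ?_, fun i => rfl, hUmeasure⟩
    have hcp : ComputablePred fun p : ℕ × Str => GB c (p.1 * 2 ^ k) p.2 = true := by
      refine ComputablePred.computable_iff.mpr
        ⟨fun p => GB c (p.1 * 2 ^ k) p.2, (primrec_GBpair c (2 ^ k)).to_comp, rfl⟩
    exact hcp.to_re
  -- A is in every level of the test
  have hAU : A ∈ ⋂ i, U i := by
    refine Set.mem_iInter.mpr fun i => ?_
    obtain ⟨m, hm⟩ := hclaim (i * 2 ^ k) A htail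
    refine Set.mem_biUnion ?_ (mem_cyl_pre A m)
    show GB c (i * 2 ^ k) (pre A m) = true
    rw [GB_iff_Gm]
    exact hm
  exact hA U hML hAU

end AR
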